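/- Let q = 2^m, k = 2^(2m−1), and h = Σ_{j=1}^{2m−1} X^(k − 2^j) ∈ F_2[X]. Consider the 2×2 matrix N(X) over F_2[X] with rows (X^k + h, X^(k−1)) and (X^(k−1), h), and let F̃ = [[0,1],[1,1]]. Then for every u ∈ F_{2^m}^*, the matrix (F̃ · N(u) · F̃)² equals diag(u^{-1}, u). -/

import Mathlib

theorem tilde_F_B_F_squared (m : ℕ) (hm : 1 ≤ m) (F : Type*) [Field F] [Fintype F]
    (hF : Fintype.card F = 2 ^ m) (u : F) (hu : u ≠ 0)
    (k : ℕ) (hk : k = 2 ^ (2 * m - 1)) (h : F)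
    (hh : h = ∑ j ∈ Finset.Icc 1 (2 * m - 1), u ^ (k - 2 ^ j))
    (N Ft : Matrix (Fin 2) (Fin 2) F)
    (hN : N = Matrix.of ![![u ^ k + h, u ^ (k - 1)], ![u ^ (k - 1), h]])
    (hFt : Ft = Matrix.of ![![0, 1], ![1, 1]]) :
    (Ft * N * Ft) ^ 2 = Matrix.of ![![u⁻¹, 0], ![0, u]] := by
  -- char 2
  have two_eq : (2 : F) = 0 := by
    have hc : ((Fintype.card F : ℕ) : F) = 0 := FiniteField.cast_card_eq_zero F
    rw [hF] at hc
    push_cast at hc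
    exact pow_eq_zero_iff (by omega) |>.mp hc
  have add_self : ∀ x : F, x + x = 0 := fun x => by
    rw [← two_mul, two_eq, zero_mul]
  have hq : ∀ x : F, x ^ (2 ^ m) = x := fun x => by
    rw [← hF]; exact FiniteField.pow_card x
  have hv : u⁻¹ ≠ 0 := inv_ne_zero hu
  -- sum lemma
  have hsum : ∑ j ∈ Finset.Icc 1 (2 * m - 1), (u⁻¹) ^ (2 ^ j) = u⁻¹ := by
    have hsplit : Finset.Icc 1 (2 * m - 1) = Finset.Ioc 0 m ∪ Finset.Ioc m (2 * m - 1) := by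
      rw [Finset.Ioc_union_Ioc_eq_Ioc (by omega) (by omega), ← Finset.Icc_succ_left_eq_Ioc]; rfl
    have hdisj : Disjoint (Finset.Ioc 0 m) (Finset.Ioc m (2 * m - 1)) :=
      Finset.disjoint_left.2 fun j hj hj' => by simp at hj hj'; omega
    rw [hsplit, Finset.sum_union hdisj]
    have hA : ∑ j ∈ Finset.Ioc m (2 * m - 1), (u⁻¹) ^ (2 ^ j)
        = ∑ j ∈ Finset.Ioc 0 (m - 1), (u⁻¹) ^ (2 ^ j) := by
      rw [show Finset.Ioc m (2 * m - 1) = Finset.map (addLeftEmbedding m) (Finset.Ioc 0 (m - 1)) by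
        rw [Finset.map_add_left_Ioc]; congr 1 <;> omega]
      rw [Finset.sum_map]
      refine Finset.sum_congr rfl fun j hj => ?_
      simp only [addLeftEmbedding_apply]
      rw [pow_add, pow_mul, hq]
    rw [hA]
    have hB : ∑ j ∈ Finset.Ioc 0 m, (u⁻¹) ^ (2 ^ j)
        = (∑ j ∈ Finset.Ioc 0 (m - 1), (u⁻¹) ^ (2 ^ j)) + u⁻¹ := by
      have : m = (m - 1) + 1 := by omega
      rw [this, Finset.sum_Ioc_succ_top (by omega)]
      rw [← this, hq]
    rw [hB]
    have := add_self (∑ j ∈ Finset.Ioc 0 (m - 1), (u⁻¹) ^ (2 ^ j))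
    linear_combination this
  -- rewrite h
  have hkpos : 1 ≤ k := by rw [hk]; exact Nat.one_le_two_pow
  have hle : ∀ j ∈ Finset.Icc 1 (2 * m - 1), 2 ^ j ≤ k := by
    intro j hj
    rw [hk]
    exact Nat.pow_le_pow_right (by norm_num) (by simp at hj; omega)
  have hh' : h = u ^ (k - 1) := by
    rw [hh]
    have : ∀ j ∈ Finset.Icc 1 (2 * m - 1),
        u ^ (k - 2 ^ j) = u ^ k * (u⁻¹) ^ (2 ^ j) := by
      intro j hj
      rw [pow_sub₀ u hu (hle j hj), inv_pow]
    rw [Finset.sum_congr rfl this, ← Finset.mul_sum, hsum,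
      pow_sub₀ u hu hkpos, pow_one]
  -- key power facts
  set s := u ^ k with hs
  set b := u ^ (k - 1) with hb
  have hbu : b * u = s := by
    rw [hb, hs, ← pow_succ]
    congr 1; omega
  have hss : s * s = u := by
    rw [hs, ← pow_add, hk]
    rw [show 2 ^ (2*m-1) + 2 ^ (2*m-1) = 2 ^ m * 2 ^ m by rw [← two_mul, ← pow_succ', show 2*m-1+1 = m+m by omega, pow_add]]
    rw [pow_mul, hq, hq]
  have hbb : b * b = u⁻¹ := by
    have h1 : (b * b * u) * u = 1 * u := by
      have : (b * u) * (b * u) = u := by rw [hbu, hss]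
      linear_combination this
    have h2 : b * b * u = 1 := mul_right_cancel₀ hu h1
    exact eq_inv_of_mul_eq_one_left h2
  -- matrix computation
  have hM : Ft * N * Ft = Matrix.of ![![b, 0], ![0, s]] := by
    subst hN hFt
    rw [hh']
    ext i j
    fin_cases i <;> fin_cases j <;>
      simp [Matrix.mul_apply, Fin.sum_univ_two] <;>
      first
        | exact add_self b
        | linear_combination (b : F) * two_eq
        | linear_combination (2 * b : F) * two_eq
  rw [hM, pow_two]
  ext i j
  fin_cases i <;> fin_cases j <;>
    simp [Matrix.mul_apply, Fin.sum_univ_two, hbb, hss]
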